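/- For t > 0 and x, y real, define p_N(t,y|s,x) = √N · q(⌊tN⌋ − ⌊sN⌋, (t−s)N + √N(y−x)) where q(n,z) = e^{−z} zⁿ/n! for n ≥ 0, z ≥ 0 (and 0 otherwise). Then for all x, y ∈ ℝ and t > s, p_N(t,y|s,x) → ρ(t−s, y−x) as N → ∞, where ρ(t,x) = (2πt)^{−1/2} e^{−x²/(2t)} is the heat kernel. -/

import Mathlib

open Real Filter Topology

/-- Poisson kernel on integers: `q(n,z) = e^{−z} zⁿ/n!` for `n ≥ 0, z ≥ 0`, else `0`. -/
noncomputable def poisKerZ (n : ℤ) (z : ℝ) : ℝ :=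
  if 0 ≤ n ∧ 0 ≤ z then Real.exp (-z) * z ^ n.toNat / (Nat.factorial n.toNat) else 0

/-- The rescaled transition function
`p_N(t,y|s,x) = √N q(⌊tN⌋ − ⌊sN⌋, (t−s)N + √N (y−x))`. -/
noncomputable def pN (N : ℕ) (t y s x : ℝ) : ℝ :=
  Real.sqrt N * poisKerZ (⌊t * N⌋ - ⌊s * N⌋) ((t - s) * N + Real.sqrt N * (y - x))

/-- The heat kernel `ρ(t,x) = (2πt)^{−1/2} e^{−x²/(2t)} 1{t>0}`. -/
noncomputable def heatKer (t x : ℝ) : ℝ :=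
  if 0 < t then (Real.sqrt (2 * Real.pi * t))⁻¹ * Real.exp (-x ^ 2 / (2 * t)) else 0

set_option maxHeartbeats 1000000 in
theorem stmt11 (s t x y : ℝ) (hst : s < t) :
    Tendsto (fun N : ℕ => pN N t y s x) atTop (nhds (heatKer (t - s) (y - x))) := by
  have hτ : 0 < t - s := sub_pos.2 hst
  set τ : ℝ := t - s with hτdef
  set w : ℝ := y - x with hwdef
  set m : ℕ → ℕ := fun N => (⌊t * N⌋ - ⌊s * N⌋).toNat with hmdef
  set z : ℕ → ℝ := fun N => τ * N + Real.sqrt N * w with hzdef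
  clear_value τ w m z
  have hNR : Tendsto (fun N : ℕ => (N : ℝ)) atTop atTop := tendsto_natCast_atTop_atTop
  have hsqtop : Tendsto (fun N : ℕ => Real.sqrt (N : ℝ)) atTop atTop := by
    have := (tendsto_rpow_atTop (by norm_num : (0:ℝ) < 1/2)).comp hNR
    refine this.congr fun N => ?_
    simp [Real.sqrt_eq_rpow, Function.comp]
  -- the eventual package of basic facts
  have hev : ∀ᶠ N : ℕ in atTop,
      (0 ≤ (⌊t * N⌋ - ⌊s * N⌋ : ℤ) ∧ 1 ≤ (m N : ℝ) ∧
        τ * N - 1 ≤ (m N : ℝ) ∧ (m N : ℝ) ≤ τ * N + 1 ∧ 0 < z N ∧ 1 ≤ (N : ℝ)) := by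
    have h1 : ∀ᶠ N : ℕ in atTop, (2:ℝ) ≤ τ * N := by
      exact (hNR.const_mul_atTop hτ).eventually_ge_atTop 2
    have h2 : ∀ᶠ N : ℕ in atTop, |w| + 1 ≤ Real.sqrt N * τ := by
      exact (hsqtop.atTop_mul_const hτ).eventually_ge_atTop (|w| + 1)
    filter_upwards [h1, h2] with N h1 h2
    have hf1 : (t * N : ℝ) - 1 < (⌊t * N⌋ : ℝ) := Int.sub_one_lt_floor _
    have hf2 : ((⌊t * N⌋ : ℤ) : ℝ) ≤ t * N := Int.floor_le _
    have hf3 : (s * N : ℝ) - 1 < (⌊s * N⌋ : ℝ) := Int.sub_one_lt_floor _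
    have hf4 : ((⌊s * N⌋ : ℤ) : ℝ) ≤ s * N := Int.floor_le _
    have hτN : τ * N = t * N - s * N := by rw [hτdef]; ring
    have hlow : τ * N - 1 ≤ ((⌊t * N⌋ - ⌊s * N⌋ : ℤ) : ℝ) := by push_cast; linarith
    have hup : ((⌊t * N⌋ - ⌊s * N⌋ : ℤ) : ℝ) ≤ τ * N + 1 := by push_cast; linarith
    have hn0 : 0 ≤ (⌊t * N⌋ - ⌊s * N⌋ : ℤ) := by
      have : (0:ℝ) ≤ ((⌊t * N⌋ - ⌊s * N⌋ : ℤ) : ℝ) := by linarith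
      exact_mod_cast this
    have hcast : (m N : ℝ) = ((⌊t * N⌋ - ⌊s * N⌋ : ℤ) : ℝ) := by
      simp only [hmdef]
      exact_mod_cast Int.toNat_of_nonneg hn0
    have hsqnn : (0:ℝ) ≤ Real.sqrt N := Real.sqrt_nonneg _
    have hsqpos : (0:ℝ) < Real.sqrt N := by nlinarith [abs_nonneg w]
    have hNN : Real.sqrt N * Real.sqrt N = (N:ℝ) := Real.mul_self_sqrt (Nat.cast_nonneg N)
    have hzpos : 0 < z N := by
      have hkey : 0 < Real.sqrt N * (Real.sqrt N * τ + w) := by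
        apply mul_pos hsqpos
        nlinarith [neg_abs_le w]
      have : Real.sqrt N * (Real.sqrt N * τ + w) = τ * N + Real.sqrt N * w := by
        rw [mul_add, ← mul_assoc, hNN]; ring
      simpa [hzdef, this] using hkey
    have hN1 : (1:ℝ) ≤ N := by
      have hN0 : (0:ℝ) < N := by nlinarith
      have : 0 < N := by exact_mod_cast hN0
      exact_mod_cast this
    exact ⟨hn0, by rw [hcast]; linarith, by rw [hcast]; linarith, by rw [hcast]; linarith,
      hzpos, hN1⟩
  -- m N / N → τ
  have hmN : Tendsto (fun N : ℕ => (m N : ℝ) / N) atTop (𝓝 τ) := by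
    have hlo : Tendsto (fun N : ℕ => τ - 1 / (N:ℝ)) atTop (𝓝 τ) := by
      simpa using (tendsto_const_nhds : Tendsto (fun _ : ℕ => τ) atTop (𝓝 τ)).sub tendsto_one_div_atTop_nhds_zero_nat
    have hhi : Tendsto (fun N : ℕ => τ + 1 / (N:ℝ)) atTop (𝓝 τ) := by
      simpa using (tendsto_const_nhds : Tendsto (fun _ : ℕ => τ) atTop (𝓝 τ)).add tendsto_one_div_atTop_nhds_zero_nat
    refine tendsto_of_tendsto_of_tendsto_of_le_of_le' hlo hhi ?_ ?_
    · filter_upwards [hev] with N h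
      obtain ⟨-, -, hlo2, -, -, hN1⟩ := h
      have hN0 : (0:ℝ) < N := by linarith
      rw [show τ - 1 / (N:ℝ) = (τ * N - 1) / N by field_simp]
      gcongr
    · filter_upwards [hev] with N h
      obtain ⟨-, -, -, hhi2, -, hN1⟩ := h
      have hN0 : (0:ℝ) < N := by linarith
      rw [show τ + 1 / (N:ℝ) = (τ * N + 1) / N by field_simp]
      gcongr
  have hmtop : Tendsto m atTop atTop := by
    rw [← tendsto_natCast_atTop_iff (R := ℝ)]
    refine tendsto_atTop_mono' atTop ?_
      (tendsto_atTop_add_const_right atTop (-1) (hNR.const_mul_atTop hτ))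
    filter_upwards [hev] with N h
    have := h.2.2.1
    linarith
  have hc : Tendsto (fun N => Stirling.stirlingSeq (m N)) atTop (𝓝 (Real.sqrt π)) :=
    Stirling.tendsto_stirlingSeq_sqrt_pi.comp hmtop
  have hπ : Real.sqrt π ≠ 0 := ne_of_gt (Real.sqrt_pos.2 Real.pi_pos)
  have hcinv : Tendsto (fun N => (Stirling.stirlingSeq (m N))⁻¹) atTop (𝓝 (Real.sqrt π)⁻¹) :=
    hc.inv₀ hπ
  -- √(N/(2m)) → √((2τ)⁻¹)
  have hsqrtlim : Tendsto (fun N : ℕ => Real.sqrt ((N:ℝ) / (2 * m N))) atTop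
      (𝓝 (Real.sqrt (2*τ)⁻¹)) := by
    have h1 : Tendsto (fun N : ℕ => (2 * ((m N : ℝ) / N))⁻¹) atTop (𝓝 (2*τ)⁻¹) :=
      (tendsto_const_nhds.mul hmN).inv₀ (mul_pos two_pos hτ).ne'
    have h2 : (fun N : ℕ => (N:ℝ) / (2 * m N)) =ᶠ[atTop]
        fun N => (2 * ((m N : ℝ) / N))⁻¹ := by
      filter_upwards [hev] with N h
      have hm1 : (1:ℝ) ≤ m N := h.2.1
      have hN1 : (1:ℝ) ≤ N := h.2.2.2.2.2
      have hm0 : (m N : ℝ) ≠ 0 := by linarith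
      have hN0 : (N : ℝ) ≠ 0 := by linarith
      field_simp
    exact (Tendsto.congr' h2.symm h1).sqrt
  -- the d, u, A, B functions
  set d : ℕ → ℝ := fun N => z N - m N with hddef
  set u : ℕ → ℝ := fun N => d N / m N with hudef
  set A : ℕ → ℝ := fun N => (m N : ℝ) * Real.log (z N / m N) - d N with hAdef
  set B : ℕ → ℝ := fun N => (m N : ℝ) * u N ^ 2 with hBdef
  clear_value d u A B
  have hd : Tendsto (fun N => d N / Real.sqrt N) atTop (𝓝 w) := by
    have h0 : Tendsto (fun N : ℕ => (τ * N - m N) / Real.sqrt N) atTop (𝓝 0) := by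
      refine squeeze_zero_norm' ?_ (tendsto_inv_atTop_zero.comp hsqtop)
      filter_upwards [hev, hsqtop.eventually_ge_atTop 1] with N h h1
      have hsqrtne : (0:ℝ) < Real.sqrt N := lt_of_lt_of_le one_pos h1
      have habs : |τ * N - (m N : ℝ)| ≤ 1 := abs_le.2 ⟨by linarith [h.2.2.2.1], by linarith [h.2.2.1]⟩
      simp only [Function.comp_apply, Real.norm_eq_abs]
      rw [abs_div, abs_of_pos hsqrtne, inv_eq_one_div]
      gcongr
    have heq : (fun N => d N / Real.sqrt N) =ᶠ[atTop]
        fun N : ℕ => (τ * N - m N) / Real.sqrt N + w := by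
      filter_upwards [hsqtop.eventually_ge_atTop 1] with N h1
      have hsqrtne : Real.sqrt N ≠ 0 := ne_of_gt (lt_of_lt_of_le one_pos h1)
      simp only [hddef, hzdef]
      field_simp
      ring
    exact Tendsto.congr' heq.symm (by simpa using h0.add (tendsto_const_nhds : Tendsto (fun _ : ℕ => w) atTop (𝓝 w)))
  have hNdivm : Tendsto (fun N : ℕ => (N:ℝ) / m N) atTop (𝓝 τ⁻¹) := by
    simpa only [inv_div] using hmN.inv₀ hτ.ne'
  have hsqN0 : Tendsto (fun N : ℕ => Real.sqrt N / N) atTop (𝓝 0) := by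
    refine Tendsto.congr (fun N => (Real.sqrt_div_self).symm) (tendsto_inv_atTop_zero.comp hsqtop)
  have hu : Tendsto u atTop (𝓝 0) := by
    have h := (hd.mul hsqN0).mul hNdivm
    refine Tendsto.congr' ?_ (by simpa using h)
    filter_upwards [hev, hsqtop.eventually_ge_atTop 1] with N h h1
    have hm0 : (m N : ℝ) ≠ 0 := by have := h.2.1; linarith
    have hN0 : (N : ℝ) ≠ 0 := by have := h.2.2.2.2.2; linarith
    have hsqrtne : Real.sqrt N ≠ 0 := ne_of_gt (lt_of_lt_of_le one_pos h1)
    simp only [hudef]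
    field_simp
  have hB : Tendsto B atTop (𝓝 (w^2 / τ)) := by
    have h := (hd.mul hd).mul hNdivm
    have hval : w * w * τ⁻¹ = w^2 / τ := by ring
    rw [hval] at h
    refine Tendsto.congr' ?_ h
    filter_upwards [hev, hsqtop.eventually_ge_atTop 1] with N h h1
    have hm0 : (m N : ℝ) ≠ 0 := by have := h.2.1; linarith
    have hN0 : (N : ℝ) ≠ 0 := by have := h.2.2.2.2.2; linarith
    have hsqrtne : Real.sqrt N ≠ 0 := ne_of_gt (lt_of_lt_of_le one_pos h1)
    have hNN : Real.sqrt N * Real.sqrt N = (N:ℝ) := Real.mul_self_sqrt (Nat.cast_nonneg N)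
    simp only [hBdef, hudef]
    rw [div_mul_div_comm, hNN, div_mul_div_comm, div_pow]
    field_simp
  have huabs : Tendsto (fun N => |u N|) atTop (𝓝 0) := by simpa using hu.abs
  have husmall : ∀ᶠ N : ℕ in atTop, |u N| < 1/2 :=
    huabs.eventually_lt_const (by norm_num)
  -- the remainder bound
  have hRbound : ∀ᶠ N : ℕ in atTop,
      ‖A N + B N / 2‖ ≤ B N * |u N| / (1 - |u N|) := by
    filter_upwards [hev, husmall] with N h hsmall
    have hm1 : (1:ℝ) ≤ m N := h.2.1
    have hm0 : (m N : ℝ) ≠ 0 := by linarith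
    have hzm : z N / m N = 1 + u N := by
      simp only [hudef, hddef]; field_simp; ring
    have hdu : d N = m N * u N := by
      simp only [hudef]; field_simp
    have key := Real.abs_log_sub_add_sum_range_le (x := -u N) (by rw [abs_neg]; linarith) 2
    have hsum : (∑ i ∈ Finset.range 2, (-u N) ^ (i+1) / (i+1)) = -u N + u N^2 / 2 := by
      norm_num [Finset.sum_range_succ]
    rw [hsum, abs_neg, sub_neg_eq_add] at key
    -- key : |(-u + u²/2) + log (1 + u)| ≤ |u|^3 / (1 - |u|)
    have hE : A N + B N / 2 = (m N : ℝ) * ((-u N + u N^2/2) + Real.log (1 + u N)) := by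
      simp only [hAdef, hBdef]
      rw [hzm, hdu]; ring
    rw [Real.norm_eq_abs, hE, abs_mul, abs_of_nonneg (by linarith : (0:ℝ) ≤ (m N:ℝ))]
    calc (m N : ℝ) * |(-u N + u N^2/2) + Real.log (1 + u N)|
        ≤ (m N : ℝ) * (|u N|^3 / (1 - |u N|)) := by gcongr
      _ = B N * |u N| / (1 - |u N|) := by
          simp only [hBdef]
          rw [show |u N|^3 = u N^2 * |u N| by rw [← sq_abs]; ring]
          ring
  have hRlim : Tendsto (fun N => B N * |u N| / (1 - |u N|)) atTop (𝓝 0) := by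
    have := (hB.mul huabs).div
      ((tendsto_const_nhds : Tendsto (fun _ : ℕ => (1:ℝ)) atTop (𝓝 1)).sub huabs)
      (by norm_num : (1:ℝ) - 0 ≠ 0)
    rw [mul_zero, zero_div] at this
    exact this
  have hR : Tendsto (fun N => A N + B N / 2) atTop (𝓝 0) :=
    squeeze_zero_norm' hRbound hRlim
  have hA : Tendsto A atTop (𝓝 (-(w^2 / (2*τ)))) := by
    have h := hR.sub (hB.div_const 2)
    have heq : (fun N => (A N + B N / 2) - B N / 2) = A := by funext N; ring
    rw [heq] at h
    have hval : (0:ℝ) - (w^2/τ)/2 = -(w^2/(2*τ)) := by ring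
    rwa [hval] at h
  -- main eventual equality
  have hEq : (fun N : ℕ => pN N t y s x) =ᶠ[atTop]
      fun N => (Stirling.stirlingSeq (m N))⁻¹ * Real.sqrt ((N:ℝ) / (2 * m N)) *
        Real.exp (A N) := by
    filter_upwards [hev] with N h
    obtain ⟨hn0, hm1c, -, -, hzpos, hN1⟩ := h
    have hm1 : 1 ≤ m N := by exact_mod_cast hm1c
    have hm0 : (0:ℝ) < (m N : ℝ) := by linarith
    have harg : (t - s) * N + Real.sqrt N * (y - x) = z N := by
      simp only [hzdef, hτdef, hwdef]
    have htoNat : (⌊t * N⌋ - ⌊s * N⌋ : ℤ).toNat = m N := by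
      simp only [hmdef]
    rw [pN, harg, poisKerZ, if_pos ⟨hn0, le_of_lt hzpos⟩, htoNat]
    have hcpos : 0 < Stirling.stirlingSeq (m N) := by
      obtain ⟨k, hk⟩ := Nat.exists_eq_succ_of_ne_zero (by omega : m N ≠ 0)
      rw [hk]; exact Stirling.stirlingSeq'_pos k
    have hstir : (Nat.factorial (m N) : ℝ) =
        Stirling.stirlingSeq (m N) *
          (Real.sqrt (2 * (m N : ℝ)) * ((m N : ℝ) / Real.exp 1) ^ (m N)) := by
      rw [Stirling.stirlingSeq]
      rw [div_mul_cancel₀]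
      positivity
    have hzm : (0:ℝ) < z N / m N := div_pos hzpos hm0
    have h1 : z N ^ (m N) =
        Real.exp ((m N : ℝ) * Real.log (z N / m N)) * (m N : ℝ) ^ (m N) := by
      rw [Real.exp_nat_mul, Real.exp_log hzm, ← mul_pow,
        div_mul_cancel₀ _ (ne_of_gt hm0)]
    have h2 : ((m N : ℝ) / Real.exp 1) ^ (m N) = (m N : ℝ) ^ (m N) / Real.exp (m N) := by
      rw [div_pow, Real.exp_one_pow]
    have h3 : Real.sqrt ((N:ℝ) / (2 * (m N : ℝ))) = Real.sqrt N / Real.sqrt (2 * (m N : ℝ)) :=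
      Real.sqrt_div (Nat.cast_nonneg N) _
    have h4 : Real.exp (A N) =
        Real.exp ((m N : ℝ) * Real.log (z N / m N)) * Real.exp (m N : ℝ) / Real.exp (z N) := by
      rw [show A N = ((m N : ℝ) * Real.log (z N / m N) + (m N : ℝ)) - z N by
        simp only [hAdef, hddef]; ring]
      rw [Real.exp_sub, Real.exp_add]
    rw [hstir, h1, h2, h3, h4, Real.exp_neg]
    have hx1 : Real.exp (z N) ≠ 0 := Real.exp_ne_zero _
    have hx2 : Real.exp ((m N : ℝ)) ≠ 0 := Real.exp_ne_zero _
    have hx3 : ((m N : ℝ)) ^ (m N) ≠ 0 := pow_ne_zero _ (ne_of_gt hm0)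
    have hx4 : Real.sqrt (2 * (m N : ℝ)) ≠ 0 := by positivity
    have hx5 : Stirling.stirlingSeq (m N) ≠ 0 := ne_of_gt hcpos
    field_simp
  -- final assembly
  have hglim : Tendsto
      (fun N => (Stirling.stirlingSeq (m N))⁻¹ * Real.sqrt ((N:ℝ) / (2 * m N)) *
        Real.exp (A N)) atTop
      (𝓝 ((Real.sqrt π)⁻¹ * Real.sqrt (2*τ)⁻¹ * Real.exp (-(w^2 / (2*τ))))) :=
    (hcinv.mul hsqrtlim).mul ((Real.continuous_exp.tendsto _).comp hA)
  have hval : (Real.sqrt π)⁻¹ * Real.sqrt (2*τ)⁻¹ * Real.exp (-(w^2 / (2*τ)))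
      = heatKer τ w := by
    rw [heatKer, if_pos hτ, Real.sqrt_inv, ← mul_inv,
      ← Real.sqrt_mul (le_of_lt Real.pi_pos)]
    rw [show π * (2*τ) = 2 * π * τ by ring, show -(w^2/(2*τ)) = -w^2/(2*τ) by ring]
  exact hval ▸ Tendsto.congr' hEq.symm hglim
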